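/- arXiv:1705.02697 — 11 statements merged into one kernel-verified Lean document; each statement's English description precedes it below -/
import Mathlib

section
/- If N is a submodule of an R-module M, then the submodule generated by the envelope E_M(N) is contained in the completely prime radical of N, i.e., ⟨E_M(N)⟩ ⊆ β_co(N). -/
/-- A submodule `P` is completely prime if it is proper and `a • m ∈ P` implies
`m ∈ P` or `a • M ⊆ P`. -/
def IsCompletelyPrimeSubmodule {R : Type*} [Ring R] {M : Type*} [AddCommGroup M] [Module R M]
    (P : Submodule R M) : Prop :=
  P ≠ ⊤ ∧ ∀ (a : R) (m : M), a • m ∈ P → m ∈ P ∨ ∀ x : M, a • x ∈ P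

/-- A submodule `P` is prime if it is proper and for every two-sided ideal `A` of `R`
and submodule `N`, `A N ⊆ P` implies `N ⊆ P` or `A M ⊆ P`. -/
def IsPrimeSubmodule {R : Type*} [Ring R] {M : Type*} [AddCommGroup M] [Module R M]
    (P : Submodule R M) : Prop :=
  P ≠ ⊤ ∧ ∀ (A : TwoSidedIdeal R) (N : Submodule R M),
    (∀ a ∈ A, ∀ n ∈ N, a • n ∈ P) → N ≤ P ∨ ∀ a ∈ A, ∀ x : M, a • x ∈ P

/-- The prime radical `β(N)`: the intersection of all prime submodules containing `N`
(equal to `⊤ = M` if there are none). -/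
def primeRadical {R : Type*} [Ring R] {M : Type*} [AddCommGroup M] [Module R M]
    (N : Submodule R M) : Submodule R M :=
  sInf {P | IsPrimeSubmodule P ∧ N ≤ P}

/-- The completely prime radical `β_co(N)`: the intersection of all completely prime
submodules containing `N` (equal to `⊤ = M` if there are none). -/
def cpRadical {R : Type*} [Ring R] {M : Type*} [AddCommGroup M] [Module R M]
    (N : Submodule R M) : Submodule R M :=
  sInf {P | IsCompletelyPrimeSubmodule P ∧ N ≤ P}

/-- The envelope `E_M(N) = {r • m : r^k • m ∈ N for some positive integer k}`. -/
def envelope {R : Type*} [Ring R] {M : Type*} [AddCommGroup M] [Module R M]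
    (N : Submodule R M) : Set M :=
  {x | ∃ (r : R) (m : M) (k : ℕ), 0 < k ∧ r ^ k • m ∈ N ∧ x = r • m}

/-- A submodule `N` is completely semiprime if `a ^ 2 • m ∈ N` implies `a • m ∈ N`. -/
def IsCompletelySemiprimeSubmodule {R : Type*} [Ring R] {M : Type*} [AddCommGroup M]
    [Module R M] (N : Submodule R M) : Prop :=
  ∀ (a : R) (m : M), a ^ 2 • m ∈ N → a • m ∈ N


lemma cp_semiprime {R : Type*} [Ring R] {M : Type*} [AddCommGroup M] [Module R M]
    {P : Submodule R M} (hP : IsCompletelyPrimeSubmodule P) :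
    IsCompletelySemiprimeSubmodule P := by
  intro a m h
  rw [pow_two, mul_smul] at h
  rcases hP.2 a (a • m) h with h' | h'
  · exact h'
  · exact h' m

lemma cp_pow_two_pow {R : Type*} [Ring R] {M : Type*} [AddCommGroup M] [Module R M]
    {P : Submodule R M} (hP : IsCompletelyPrimeSubmodule P) (a : R) (m : M) :
    ∀ j : ℕ, a ^ (2 ^ j) • m ∈ P → a • m ∈ P := by
  intro j
  induction j with
  | zero => simp
  | succ n ih =>
    intro h
    apply ih
    apply cp_semiprime hP
    rwa [← pow_mul, ← pow_succ]

/-- `⟨E_M(N)⟩ ⊆ β_co(N)`. -/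
theorem span_envelope_le_cpRadical {R : Type*} [Ring R] {M : Type*} [AddCommGroup M]
    [Module R M] (N : Submodule R M) :
    Submodule.span R (envelope N) ≤ cpRadical N := by
  apply le_sInf
  rintro P ⟨hPprime, hNP⟩
  rw [Submodule.span_le]
  rintro x ⟨r, m, k, hk, hN, rfl⟩
  apply cp_pow_two_pow hPprime r m k
  have hle : k ≤ 2 ^ k := Nat.le_of_lt (Nat.lt_two_pow_self (n := k))
  have : r ^ (2 ^ k) • m = r ^ (2 ^ k - k) • (r ^ k • m) := by
    rw [smul_smul, ← pow_add, Nat.sub_add_cancel hle]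
  rw [this]
  exact Submodule.smul_mem _ _ (hNP hN)
end

section
/- If N is a completely semiprime submodule of an R-module M, then the envelope of N equals N, i.e., E_M(N) = N. -/
/-- if `N` is a (proper) completely semiprime submodule then `E_M(N) = N`. -/
theorem envelope_eq_self_of_completelySemiprime {R : Type*} [Ring R] {M : Type*}
    [AddCommGroup M] [Module R M] (N : Submodule R M) (hproper : N ≠ ⊤)
    (hcsp : IsCompletelySemiprimeSubmodule N) :
    envelope N = (N : Set M) := by
  have key : ∀ k : ℕ, 0 < k → ∀ (r : R) (m : M), r ^ k • m ∈ N → r • m ∈ N := by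
    intro k
    induction k using Nat.strong_induction_on with
    | _ k ih =>
      intro hk r m hmem
      rcases Nat.lt_or_ge k 2 with h2 | h2
      · interval_cases k
        · simpa using hmem
      · have hsq : (r ^ (k - 1)) ^ 2 • m ∈ N := by
          have : (r ^ (k - 1)) ^ 2 = r ^ (k - 2) * r ^ k := by
            rw [← pow_mul, ← pow_add]; congr 1; omega
          rw [this, mul_smul]
          exact N.smul_mem _ hmem
        have := hcsp _ _ hsq
        exact ih (k - 1) (by omega) (by omega) r m (this)
  ext x
  constructor
  · rintro ⟨r, m, k, hk, hmem, rfl⟩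
    exact key k hk r m hmem
  · intro hx
    exact ⟨1, x, 1, one_pos, by simpa using hx, by simp⟩
end

section
/- For any completely semiprime submodule N of a module M, the envelope E_M(N) is a submodule of M. -/
/-- for a completely semiprime submodule `N`, `E_M(N)` is a submodule of `M`. -/
theorem envelope_isSubmodule_of_completelySemiprime {R : Type*} [Ring R] {M : Type*}
    [AddCommGroup M] [Module R M] (N : Submodule R M)
    (hcsp : IsCompletelySemiprimeSubmodule N) :
    ∃ S : Submodule R M, (S : Set M) = envelope N := by
  have key : ∀ (k : ℕ) (r : R) (m : M), 0 < k → r ^ k • m ∈ N → r • m ∈ N := by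
    intro k
    induction k with
    | zero => intro r m h; exact absurd h (lt_irrefl 0)
    | succ n ih =>
      intro r m _ hmem
      rcases Nat.eq_zero_or_pos n with h0 | hpos
      · subst h0; simpa using hmem
      · apply ih r m hpos
        apply hcsp (r ^ n) m
        have he : n - 1 + (n + 1) = n * 2 := by omega
        have : (r ^ n) ^ 2 • m = r ^ (n - 1) • (r ^ (n + 1) • m) := by
          rw [← mul_smul, ← pow_add, he, ← pow_mul]
        rw [this]
        exact N.smul_mem _ hmem
  refine ⟨N, ?_⟩
  ext x
  constructor
  · intro hx
    exact ⟨1, x, 1, one_pos, by simpa using hx, by simp⟩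
  · rintro ⟨r, m, k, hk, hmem, rfl⟩
    exact key k r m hk hmem
end

section
/- If every submodule of a module M is completely semiprime, then E_M(N) is a submodule of M for every submodule N of M. -/
lemma aux_pow_mem {R : Type*} [Ring R] {M : Type*} [AddCommGroup M] [Module R M]
    (h : ∀ N : Submodule R M, IsCompletelySemiprimeSubmodule N)
    (N : Submodule R M) (r : R) (m : M) :
    ∀ k : ℕ, 0 < k → r ^ k • m ∈ N → r • m ∈ N := by
  intro k
  induction k using Nat.strong_induction_on with
  | _ k ih =>
    intro hk hmem
    rcases Nat.lt_or_ge k 2 with h2 | h2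
    · interval_cases k
      · simpa using hmem
    · have h1 : r ^ (2 * (k - 1)) • m ∈ N := by
        have he : 2 * (k - 1) = k - 2 + k := by omega
        have : r ^ (2 * (k - 1)) • m = r ^ (k - 2) • (r ^ k • m) := by
          rw [← mul_smul, ← pow_add, he]
        rw [this]
        exact N.smul_mem _ hmem
      have h2' : (r ^ (k - 1)) ^ 2 • m ∈ N := by
        rw [← pow_mul]
        have he2 : (k - 1) * 2 = 2 * (k - 1) := by ring
        rwa [he2]
      have h3 : r ^ (k - 1) • m ∈ N := h N _ _ h2'
      exact ih (k - 1) (by omega) (by omega) h3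

/-- if every submodule of `M` is completely semiprime, then `E_M(N)` is a
submodule of `M` for every submodule `N`. -/
theorem envelope_isSubmodule_of_all_completelySemiprime {R : Type*} [Ring R] {M : Type*}
    [AddCommGroup M] [Module R M]
    (h : ∀ N : Submodule R M, IsCompletelySemiprimeSubmodule N) :
    ∀ N : Submodule R M, ∃ S : Submodule R M, (S : Set M) = envelope N := by
  intro N
  refine ⟨N, ?_⟩
  ext x
  constructor
  · intro hx
    exact ⟨1, x, 1, one_pos, by simpa using hx, by simp⟩
  · rintro ⟨r, m, k, hk, hmem, rfl⟩
    exact aux_pow_mem h N r m k hk hmem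
end

section
/- If M is a 2-primal module, then E_M(β(M)) = β(M); in particular, E_M(β(M)) is a submodule of M. -/
lemma cpRadical_csp {R : Type*} [Ring R] {M : Type*} [AddCommGroup M] [Module R M] :
    IsCompletelySemiprimeSubmodule (cpRadical (⊥ : Submodule R M)) := by
  intro a m h
  rw [cpRadical, Submodule.mem_sInf] at h ⊢
  intro P hP
  have hm : a • (a • m) ∈ P := by
    rw [smul_smul, ← sq]; exact h P hP
  rcases hP.1.2 a (a • m) hm with h1 | h2
  · exact h1
  · exact h2 m

lemma csp_pow {R : Type*} [Ring R] {M : Type*} [AddCommGroup M] [Module R M]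
    {N : Submodule R M} (hN : IsCompletelySemiprimeSubmodule N) :
    ∀ k : ℕ, 0 < k → ∀ (r : R) (m : M), r ^ k • m ∈ N → r • m ∈ N := by
  intro k
  induction k using Nat.strong_induction_on with
  | _ k ih =>
    intro hk r m hm
    match k, hk with
    | 1, _ => simpa using hm
    | (n+2), _ =>
      have h2 : r ^ 2 • (r ^ n • m) ∈ N := by
        rw [smul_smul, ← pow_add]; simpa [add_comm] using hm
      have := hN r (r ^ n • m) h2
      rw [smul_smul, ← pow_succ'] at this
      exact ih (n+1) (by omega) (Nat.succ_pos n) r m this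

/-- if `M` is 2-primal then `E_M(β(M)) = β(M)`; in particular it is a
submodule of `M`. -/
theorem envelope_primeRadical_eq_of_twoPrimal {R : Type*} [Ring R] {M : Type*}
    [AddCommGroup M] [Module R M]
    (h2p : cpRadical (⊥ : Submodule R M) = primeRadical (⊥ : Submodule R M)) :
    envelope (primeRadical (⊥ : Submodule R M)) = ((primeRadical (⊥ : Submodule R M) : Submodule R M) : Set M) ∧
      ∃ S : Submodule R M, (S : Set M) = envelope (primeRadical (⊥ : Submodule R M)) := by
  have hcsp : IsCompletelySemiprimeSubmodule (primeRadical (⊥ : Submodule R M)) := by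
    rw [← h2p]; exact cpRadical_csp
  have heq : envelope (primeRadical (⊥ : Submodule R M))
      = ((primeRadical (⊥ : Submodule R M) : Submodule R M) : Set M) := by
    ext x
    constructor
    · rintro ⟨r, m, k, hk, hmem, rfl⟩
      exact csp_pow hcsp k hk r m hmem
    · intro hx
      exact ⟨1, x, 1, one_pos, by simpa using hx, by simp⟩
  exact ⟨heq, _, heq.symm⟩
end

section
/- If N is a 2-primal submodule of M, then ⟨E_M(N)⟩/N ⊆ ⟨E_M(β(N))⟩/N = β(N)/N. In particular, for any 2-primal module M, ⟨E_M(0)⟩ ⊆ β(M). -/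
section Aux
variable {R : Type*} [Ring R] {M : Type*} [AddCommGroup M] [Module R M]

lemma le_primeRadical (N : Submodule R M) : N ≤ primeRadical N :=
  le_sInf fun _ hP => hP.2

lemma envelope_mono {N N' : Submodule R M} (h : N ≤ N') : envelope N ⊆ envelope N' := by
  rintro x ⟨r, m, k, hk, hm, rfl⟩; exact ⟨r, m, k, hk, h hm, rfl⟩

lemma cpRadical_semiprime (N : Submodule R M) :
    IsCompletelySemiprimeSubmodule (cpRadical N) := by
  intro a m h
  rw [cpRadical, Submodule.mem_sInf] at h ⊢
  intro P hP
  have h' := h P hP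
  rw [pow_two, mul_smul] at h'
  rcases hP.1.2 a (a • m) h' with h1 | h2
  · exact h1
  · exact h2 m

lemma semiprime_pow {N : Submodule R M} (hN : IsCompletelySemiprimeSubmodule N)
    (r : R) (m : M) : ∀ k, 0 < k → r ^ k • m ∈ N → r • m ∈ N := by
  intro k
  induction k using Nat.strong_induction_on with
  | _ k ih =>
    intro hk h
    rcases Nat.lt_or_ge k 2 with h2 | h2
    · interval_cases k
      · simpa using h
    · have h' : (r ^ (k - 1)) ^ 2 • m ∈ N := by
        have e : (r ^ (k - 1)) ^ 2 • m = r ^ (k - 2) • (r ^ k • m) := by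
          have ek : (k - 1) * 2 = (k - 2) + k := by omega
          rw [← pow_mul, ek, pow_add, mul_smul]
        rw [e]; exact N.smul_mem _ h
      exact ih (k - 1) (by omega) (by omega) (hN _ _ h')

lemma myComapPrime (N : Submodule R M) (Q : Submodule R (M ⧸ N))
    (hQ : IsPrimeSubmodule Q) : IsPrimeSubmodule (Q.comap N.mkQ) := by
  constructor
  · intro h
    apply hQ.1
    rw [eq_top_iff]
    intro y _
    obtain ⟨x, rfl⟩ := N.mkQ_surjective y
    have : x ∈ Q.comap N.mkQ := by rw [h]; trivial
    exact this
  · intro A N' hAN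
    have key : ∀ a ∈ A, ∀ n ∈ N'.map N.mkQ, a • n ∈ Q := by
      rintro a ha _ ⟨n, hn, rfl⟩
      have := hAN a ha n hn
      simpa [Submodule.mem_comap] using this
    rcases hQ.2 A (N'.map N.mkQ) key with h | h
    · left; intro n hn; exact h ⟨n, hn, rfl⟩
    · right; intro a ha x
      have := h a ha (N.mkQ x)
      simpa [Submodule.mem_comap] using this

lemma myMapPrime (N P : Submodule R M) (hP : IsPrimeSubmodule P) (hNP : N ≤ P) :
    IsPrimeSubmodule (P.map N.mkQ) := by
  have hcm : (P.map N.mkQ).comap N.mkQ = P := by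
    rw [Submodule.comap_map_eq, N.ker_mkQ, sup_eq_left.mpr hNP]
  constructor
  · intro h
    apply hP.1
    rw [← hcm, h, Submodule.comap_top]
  · intro A N'' hA
    have key : ∀ a ∈ A, ∀ n ∈ N''.comap N.mkQ, a • n ∈ P := by
      intro a ha n hn
      rw [← hcm, Submodule.mem_comap]
      have := hA a ha (N.mkQ n) hn
      simpa using this
    rcases hP.2 A (N''.comap N.mkQ) key with h | h
    · left
      intro y hy
      obtain ⟨x, rfl⟩ := N.mkQ_surjective y
      exact ⟨x, h hy, rfl⟩
    · right
      intro a ha y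
      obtain ⟨x, rfl⟩ := N.mkQ_surjective y
      exact ⟨a • x, h a ha x, by simp⟩

lemma radical_quot (N : Submodule R M) :
    (primeRadical N).map N.mkQ = primeRadical (⊥ : Submodule R (M ⧸ N)) := by
  apply le_antisymm
  · rintro _ ⟨x, hx, rfl⟩
    rw [primeRadical, Submodule.mem_sInf]
    intro Q hQ
    simp only [SetLike.mem_coe, primeRadical, Submodule.mem_sInf] at hx
    exact hx _ ⟨myComapPrime N Q hQ.1, fun n hn => by
      simpa [Submodule.mem_comap] using (Submodule.Quotient.mk_eq_zero N).2 hn ▸ Q.zero_mem⟩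
  · intro y hy
    obtain ⟨x, rfl⟩ := N.mkQ_surjective y
    refine ⟨x, ?_, rfl⟩
    show x ∈ primeRadical N
    rw [primeRadical, Submodule.mem_sInf]
    intro P hP
    rw [primeRadical, Submodule.mem_sInf] at hy
    have hmem := hy (P.map N.mkQ) ⟨myMapPrime N P hP.1 hP.2, bot_le⟩
    have hcm : (P.map N.mkQ).comap N.mkQ = P := by
      rw [Submodule.comap_map_eq, N.ker_mkQ, sup_eq_left.mpr hP.2]
    rw [← hcm]; exact hmem

end Aux

/-- if `N` is a 2-primal submodule of `M`, then
`⟨E_M(N)⟩/N ⊆ ⟨E_M(β(N))⟩/N = β(N)/N`. -/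
theorem span_envelope_quot_le_of_twoPrimal {R : Type*} [Ring R] {M : Type*}
    [AddCommGroup M] [Module R M] (N : Submodule R M)
    (h2p : cpRadical (⊥ : Submodule R (M ⧸ N)) = primeRadical (⊥ : Submodule R (M ⧸ N))) :
    (Submodule.span R (envelope N)).map N.mkQ ≤
        (Submodule.span R (envelope (primeRadical N))).map N.mkQ ∧
      (Submodule.span R (envelope (primeRadical N))).map N.mkQ =
        (primeRadical N).map N.mkQ := by
  constructor
  · exact Submodule.map_mono (Submodule.span_mono (envelope_mono (le_primeRadical N)))
  · apply le_antisymm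
    · rw [Submodule.map_span]
      apply Submodule.span_le.2
      rintro _ ⟨_, ⟨r, m, k, hk, hm, rfl⟩, rfl⟩
      have h1 : r ^ k • (N.mkQ m) ∈ cpRadical (⊥ : Submodule R (M ⧸ N)) := by
        rw [h2p, ← radical_quot N]
        have : N.mkQ (r ^ k • m) ∈ (primeRadical N).map N.mkQ :=
          Submodule.mem_map_of_mem hm
        simpa using this
      have h2 := semiprime_pow (cpRadical_semiprime (⊥ : Submodule R (M ⧸ N)))
        r (N.mkQ m) k hk h1
      rw [h2p, ← radical_quot N] at h2
      simpa using h2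
    · apply Submodule.map_mono
      intro x hx
      apply Submodule.subset_span
      exact ⟨1, x, 1, one_pos, by simpa using hx, by simp⟩
end

section
/- Any 2-primal submodule N of an R-module M with β(N) = N satisfies the radical formula, i.e., ⟨E_M(N)⟩ = β(N). -/
section Aux

variable {R : Type*} [Ring R] {M : Type*} [AddCommGroup M] [Module R M]

lemma cp_pow_mem {P : Submodule R M} (hP : IsCompletelyPrimeSubmodule P) :
    ∀ (k : ℕ) (r : R) (m : M), 0 < k → r ^ k • m ∈ P → r • m ∈ P := by
  intro k
  induction k with
  | zero => intro r m h; exact absurd h (lt_irrefl 0)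
  | succ n ih =>
    intro r m _ hmem
    rcases Nat.eq_zero_or_pos n with hn | hn
    · subst hn; simpa using hmem
    · have : r • (r ^ n • m) ∈ P := by
        rw [← mul_smul, ← pow_succ']; exact hmem
      rcases hP.2 r (r ^ n • m) this with h | h
      · exact ih r m hn h
      · exact h m

lemma comap_cp (N : Submodule R M) {P : Submodule R (M ⧸ N)}
    (hP : IsCompletelyPrimeSubmodule P) :
    IsCompletelyPrimeSubmodule (P.comap N.mkQ) ∧ N ≤ P.comap N.mkQ := by
  refine ⟨⟨?_, ?_⟩, ?_⟩
  · intro h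
    apply hP.1
    rw [eq_top_iff]
    intro y _
    obtain ⟨x, rfl⟩ := N.mkQ_surjective y
    have : x ∈ P.comap N.mkQ := h ▸ Submodule.mem_top
    exact this
  · intro a m hm
    have : a • N.mkQ m ∈ P := by simpa using hm
    rcases hP.2 a (N.mkQ m) this with h | h
    · exact Or.inl h
    · refine Or.inr fun x => ?_
      have := h (N.mkQ x)
      simpa using this
  · intro n hn
    simp [Submodule.mem_comap, (Submodule.Quotient.mk_eq_zero N).mpr hn]

lemma map_prime (N : Submodule R M) {P : Submodule R M} (hNP : N ≤ P)
    (hP : IsPrimeSubmodule P) : IsPrimeSubmodule (P.map N.mkQ) := by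
  have hcomap : (P.map N.mkQ).comap N.mkQ = P := by
    rw [Submodule.comap_map_eq, Submodule.ker_mkQ, sup_eq_left.mpr hNP]
  constructor
  · intro h
    apply hP.1
    rw [eq_top_iff]
    intro x _
    have : x ∈ (P.map N.mkQ).comap N.mkQ := by
      rw [h]; exact Submodule.mem_top
    rwa [hcomap] at this
  · intro A N' hAN'
    have key : ∀ a ∈ A, ∀ n ∈ N'.comap N.mkQ, a • n ∈ P := by
      intro a ha n hn
      have : a • N.mkQ n ∈ P.map N.mkQ := hAN' a ha (N.mkQ n) hn
      have : N.mkQ (a • n) ∈ P.map N.mkQ := by simpa using this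
      have h2 : a • n ∈ (P.map N.mkQ).comap N.mkQ := this
      rwa [hcomap] at h2
    rcases hP.2 A (N'.comap N.mkQ) key with h | h
    · left
      intro y hy
      obtain ⟨x, rfl⟩ := N.mkQ_surjective y
      exact ⟨x, h hy, rfl⟩
    · right
      intro a ha y
      obtain ⟨x, rfl⟩ := N.mkQ_surjective y
      exact ⟨a • x, h a ha x, by simp⟩

end Aux

/-- a 2-primal submodule `N` with `β(N) = N` satisfies the radical formula. -/
theorem radical_formula_of_twoPrimal_of_primeRadical_eq {R : Type*} [Ring R] {M : Type*}
    [AddCommGroup M] [Module R M] (N : Submodule R M)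
    (h2p : cpRadical (⊥ : Submodule R (M ⧸ N)) = primeRadical (⊥ : Submodule R (M ⧸ N)))
    (hrad : primeRadical N = N) :
    Submodule.span R (envelope N) = primeRadical N := by
  rw [hrad]
  apply le_antisymm
  · rw [Submodule.span_le]
    intro x hx
    obtain ⟨r, m, k, hk, hmem, rfl⟩ := hx
    -- step 1: r • m ∈ cpRadical N
    have h1 : r • m ∈ cpRadical N := by
      apply Submodule.mem_sInf.mpr
      rintro P ⟨hP, hNP⟩
      exact cp_pow_mem hP k r m hk (hNP hmem)
    -- step 2: its image is in cpRadical ⊥ of the quotient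
    have h2 : N.mkQ (r • m) ∈ cpRadical (⊥ : Submodule R (M ⧸ N)) := by
      apply Submodule.mem_sInf.mpr
      rintro P ⟨hP, -⟩
      obtain ⟨hcp, hle⟩ := comap_cp N hP
      exact Submodule.mem_sInf.mp h1 _ ⟨hcp, hle⟩
    rw [h2p] at h2
    -- step 3: r • m ∈ primeRadical N = N
    have h3 : r • m ∈ primeRadical N := by
      apply Submodule.mem_sInf.mpr
      rintro P ⟨hP, hNP⟩
      have : N.mkQ (r • m) ∈ P.map N.mkQ :=
        Submodule.mem_sInf.mp h2 _ ⟨map_prime N hNP hP, bot_le⟩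
      obtain ⟨p, hp, hpe⟩ := this
      have : r • m - p ∈ N := by
        rw [← Submodule.Quotient.mk_eq_zero (p := N)]
        have : N.mkQ (r • m - p) = 0 := by
          rw [map_sub, hpe, sub_self]
        simpa using this
      have := add_mem (hNP this) hp
      simpa using this
    rwa [hrad] at h3
  · intro n hn
    apply Submodule.subset_span
    exact ⟨1, n, 1, one_pos, by simpa using hn, by simp⟩
end

section
/- Every completely prime submodule N of an R-module M satisfies the radical formula: ⟨E_M(N)⟩ = β(N) = N. -/
/-- every completely prime submodule satisfies the radical formula. -/
theorem radical_formula_of_completelyPrime {R : Type*} [Ring R] {M : Type*}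
    [AddCommGroup M] [Module R M] (N : Submodule R M)
    (hcp : IsCompletelyPrimeSubmodule N) :
    Submodule.span R (envelope N) = primeRadical N ∧ primeRadical N = N := by
  obtain ⟨hne, hcp'⟩ := hcp
  -- N is prime
  have hprime : IsPrimeSubmodule N := by
    refine ⟨hne, fun A N' h => ?_⟩
    by_cases hN' : N' ≤ N
    · exact Or.inl hN'
    · right
      obtain ⟨n, hnN', hnN⟩ := Set.not_subset.mp hN'
      intro a ha x
      rcases hcp' a n (h a ha n hnN') with h1 | h2
      · exact absurd h1 hnN
      · exact h2 x
  have hrad : primeRadical N = N := by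
    apply le_antisymm
    · exact sInf_le ⟨hprime, le_refl N⟩
    · exact le_sInf fun P hP => hP.2
  refine ⟨?_, hrad⟩
  rw [hrad]
  apply le_antisymm
  · rw [Submodule.span_le]
    rintro x ⟨r, m, k, hk, hrm, rfl⟩
    obtain ⟨k, rfl⟩ : ∃ n, k = n + 1 := ⟨k - 1, (Nat.succ_pred_eq_of_pos hk).symm⟩
    clear hk
    induction k with
    | zero => simpa using hrm
    | succ n ih =>
      rw [pow_succ', mul_smul] at hrm
      rcases hcp' r _ hrm with h1 | h2
      · exact ih h1
      · exact h2 m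
  · intro x hx
    apply Submodule.subset_span
    exact ⟨1, x, 1, one_pos, by simpa using hx, by simp⟩
end

section
/- If M is a 2-primal R-module such that β(M) = β(R)M, then the zero submodule of M satisfies the radical formula: ⟨E_M(0)⟩ = β(M). -/
/-- A two-sided ideal `I` of `R` is prime if it is proper and `A B ⊆ I` implies
`A ⊆ I` or `B ⊆ I` for all two-sided ideals `A`, `B`. -/
def IsPrimeTwoSidedIdeal {R : Type*} [Ring R] (I : TwoSidedIdeal R) : Prop :=
  I ≠ ⊤ ∧ ∀ A B : TwoSidedIdeal R, (∀ a ∈ A, ∀ b ∈ B, a * b ∈ I) → A ≤ I ∨ B ≤ I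

/-- A two-sided ideal `I` of `R` is completely prime if it is proper and
`a * b ∈ I` implies `a ∈ I` or `b ∈ I`. -/
def IsCompletelyPrimeTwoSidedIdeal {R : Type*} [Ring R] (I : TwoSidedIdeal R) : Prop :=
  I ≠ ⊤ ∧ ∀ a b : R, a * b ∈ I → a ∈ I ∨ b ∈ I

/-- The prime radical `β(R)` of the ring `R`: the intersection of all prime
two-sided ideals of `R`. -/
def ringPrimeRadical (R : Type*) [Ring R] : Set R :=
  {a : R | ∀ I : TwoSidedIdeal R, IsPrimeTwoSidedIdeal I → a ∈ I}

/-- The completely prime radical `β_co(R)` of the ring `R`: the intersection of all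
completely prime two-sided ideals of `R`. -/
def ringCpRadical (R : Type*) [Ring R] : Set R :=
  {a : R | ∀ I : TwoSidedIdeal R, IsCompletelyPrimeTwoSidedIdeal I → a ∈ I}

-- auxiliary lemmas to insert

section Aux

variable {R : Type*} [Ring R]

/-- Every element of the prime radical of a ring is nilpotent. -/
lemma aux_nilpotent_of_mem_ringPrimeRadical {a : R} (ha : a ∈ ringPrimeRadical R) :
    ∃ n : ℕ, 0 < n ∧ a ^ n = 0 := by
  by_contra h
  push_neg at h
  -- the m-system of powers of `a`
  set S : Set R := {x | ∃ n : ℕ, 0 < n ∧ x = a ^ n} with hS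
  have h0S : (0 : R) ∉ S := by
    rintro ⟨n, hn, hx⟩
    exact h n hn hx.symm
  have haS : a ∈ S := ⟨1, one_pos, (pow_one a).symm⟩
  -- the family of two-sided ideals disjoint from S
  set F : Set (TwoSidedIdeal R) := {I | ∀ x ∈ S, x ∉ I} with hF
  have hbot : (⊥ : TwoSidedIdeal R) ∈ F := by
    intro x hx hxbot
    rw [TwoSidedIdeal.mem_bot] at hxbot
    exact h0S (hxbot ▸ hx)
  have hub : ∀ c ⊆ F, IsChain (· ≤ ·) c → ∀ I0 ∈ c, ∃ ub ∈ F, ∀ z ∈ c, z ≤ ub := by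
    intro c hcF hchain I0 hI0
    refine ⟨TwoSidedIdeal.mk' (⋃ J ∈ c, (J : Set R))
      (Set.mem_biUnion hI0 I0.zero_mem) ?_ ?_ ?_ ?_, ?_, ?_⟩
    · rintro x y hx hy
      obtain ⟨J1, hJ1, hx⟩ := Set.mem_iUnion₂.mp hx
      obtain ⟨J2, hJ2, hy⟩ := Set.mem_iUnion₂.mp hy
      rcases hchain.total hJ1 hJ2 with hle | hle
      · exact Set.mem_biUnion hJ2 (J2.add_mem (hle hx) hy)
      · exact Set.mem_biUnion hJ1 (J1.add_mem hx (hle hy))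
    · rintro x hx
      obtain ⟨J1, hJ1, hx⟩ := Set.mem_iUnion₂.mp hx
      exact Set.mem_biUnion hJ1 (J1.neg_mem hx)
    · rintro x y hy
      obtain ⟨J1, hJ1, hy⟩ := Set.mem_iUnion₂.mp hy
      exact Set.mem_biUnion hJ1 (J1.mul_mem_left _ _ hy)
    · rintro x y hx
      obtain ⟨J1, hJ1, hx⟩ := Set.mem_iUnion₂.mp hx
      exact Set.mem_biUnion hJ1 (J1.mul_mem_right _ _ hx)
    · intro x hx hxU
      rw [TwoSidedIdeal.mem_mk'] at hxU
      obtain ⟨J1, hJ1, hx'⟩ := Set.mem_iUnion₂.mp hxU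
      exact hcF hJ1 x hx hx'
    · intro J hJ x hx
      rw [TwoSidedIdeal.mem_mk']
      exact Set.mem_biUnion hJ hx
  obtain ⟨I, -, hIF, hImax⟩ := zorn_le_nonempty₀ F hub ⊥ hbot
-- I is maximal among ideals disjoint from S; show it is prime
  have hIprime : IsPrimeTwoSidedIdeal I := by
    constructor
    · intro hItop
      exact hIF a haS (hItop ▸ TwoSidedIdeal.mem_top R)
    · intro A B hAB
      by_contra hc
      push_neg at hc
      obtain ⟨α, hαA, hαI⟩ := SetLike.not_le_iff_exists.mp hc.1
      obtain ⟨β, hβB, hβI⟩ := SetLike.not_le_iff_exists.mp hc.2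
      -- the sum ideal I + A
      have sumIdeal : ∀ (J : TwoSidedIdeal R), ∃ K : TwoSidedIdeal R,
          ∀ x, x ∈ K ↔ ∃ i ∈ I, ∃ j ∈ J, x = i + j := by
        intro J
        refine ⟨TwoSidedIdeal.mk' {x | ∃ i ∈ I, ∃ j ∈ J, x = i + j}
          ⟨0, I.zero_mem, 0, J.zero_mem, by simp⟩ ?_ ?_ ?_ ?_, fun x =>
          TwoSidedIdeal.mem_mk' _ _ _ _ _ _ x⟩
        · rintro x y ⟨i, hi, j, hj, rfl⟩ ⟨i', hi', j', hj', rfl⟩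
          exact ⟨i + i', I.add_mem hi hi', j + j', J.add_mem hj hj', by abel⟩
        · rintro x ⟨i, hi, j, hj, rfl⟩
          exact ⟨-i, I.neg_mem hi, -j, J.neg_mem hj, by abel⟩
        · rintro x y ⟨i, hi, j, hj, rfl⟩
          exact ⟨x * i, I.mul_mem_left _ _ hi, x * j, J.mul_mem_left _ _ hj, by noncomm_ring⟩
        · rintro x y ⟨i, hi, j, hj, rfl⟩
          exact ⟨i * y, I.mul_mem_right _ _ hi, j * y, J.mul_mem_right _ _ hj, by noncomm_ring⟩
      obtain ⟨KA, hKA⟩ := sumIdeal A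
      obtain ⟨KB, hKB⟩ := sumIdeal B
      -- I + A meets S; otherwise maximality forces I + A = I, contradicting α
      have meet : ∀ (J : TwoSidedIdeal R) (K : TwoSidedIdeal R)
          (hK : ∀ x, x ∈ K ↔ ∃ i ∈ I, ∃ j ∈ J, x = i + j)
          (γ : R) (hγJ : γ ∈ J) (hγI : γ ∉ I), ∃ s ∈ S, s ∈ K := by
        intro J K hK γ hγJ hγI
        by_contra hdisj
        push_neg at hdisj
        have hKF : K ∈ F := fun x hx hxK => hdisj x hx hxK
        have hIK : I ≤ K := by
          intro x hx
          exact (hK x).mpr ⟨x, hx, 0, J.zero_mem, (add_zero x).symm⟩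
        have := hImax hKF hIK
        exact hγI (this ((hK γ).mpr ⟨0, I.zero_mem, γ, hγJ, (zero_add γ).symm⟩))
      obtain ⟨s1, ⟨n1, hn1, rfl⟩, hs1⟩ := meet A KA hKA α hαA hαI
      obtain ⟨s2, ⟨n2, hn2, rfl⟩, hs2⟩ := meet B KB hKB β hβB hβI
      -- a^(n1+1+n2) = a^n1 * a * a^n2 ∈ I
      obtain ⟨i1, hi1, j1, hj1, he1⟩ := (hKA _).mp hs1
      obtain ⟨i2, hi2, j2, hj2, he2⟩ := (hKB _).mp hs2
      have key : a ^ (n1 + 1 + n2) ∈ I := by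
        have : a ^ (n1 + 1 + n2) = a ^ n1 * a * a ^ n2 := by
          rw [pow_add, pow_add, pow_one]
        rw [this, he1, he2]
        have expand : (i1 + j1) * a * (i2 + j2)
            = i1 * (a * (i2 + j2)) + j1 * a * i2 + j1 * (a * j2) := by noncomm_ring
        rw [expand]
        refine I.add_mem (I.add_mem ?_ ?_) ?_
        · exact I.mul_mem_right _ _ hi1
        · exact I.mul_mem_left _ _ hi2
        · exact hAB j1 hj1 (a * j2) (B.mul_mem_left _ _ hj2)
      exact hIF _ ⟨n1 + 1 + n2, by omega, rfl⟩ key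
  exact hIF a haS (ha I hIprime)
end Aux

lemma aux_smul_mem_of_pow_smul_mem {R : Type*} [Ring R] {M : Type*} [AddCommGroup M]
    [Module R M] {P : Submodule R M} (hP : IsCompletelyPrimeSubmodule P) :
    ∀ (k : ℕ) (r : R) (m : M), 0 < k → r ^ k • m ∈ P → r • m ∈ P := by
  intro k
  induction k with
  | zero => intro r m h; omega
  | succ n ih =>
    intro r m _ hmem
    rcases Nat.eq_zero_or_pos n with rfl | hn
    · simpa using hmem
    · rcases hP.2 r (r ^ n • m) (by rwa [← mul_smul, ← pow_succ']) with h | h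
      · exact ih r m hn h
      · exact h m

/-- if `M` is a 2-primal `R`-module with `β(M) = β(R)M`, then the zero
submodule of `M` satisfies the radical formula. -/
theorem radical_formula_zero_of_twoPrimal_of_primeRadical_eq_smul {R : Type*} [Ring R]
    {M : Type*} [AddCommGroup M] [Module R M]
    (h2p : cpRadical (⊥ : Submodule R M) = primeRadical (⊥ : Submodule R M))
    (hβ : primeRadical (⊥ : Submodule R M) =
      Submodule.span R {x : M | ∃ a ∈ ringPrimeRadical R, ∃ m : M, x = a • m}) :
    Submodule.span R (envelope (⊥ : Submodule R M)) = primeRadical (⊥ : Submodule R M) := by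
  apply le_antisymm
  · -- span (envelope ⊥) ≤ cpRadical ⊥ = primeRadical ⊥
    rw [← h2p]
    rw [Submodule.span_le]
    rintro x ⟨r, m, k, hk, hrk, rfl⟩
    rw [SetLike.mem_coe, cpRadical, Submodule.mem_sInf]
    rintro P ⟨hP, -⟩
    refine aux_smul_mem_of_pow_smul_mem hP k r m hk ?_
    rw [Submodule.mem_bot] at hrk
    rw [hrk]
    exact P.zero_mem
  · rw [hβ, Submodule.span_le]
    rintro x ⟨a, ha, m, rfl⟩
    obtain ⟨n, hn, han⟩ := aux_nilpotent_of_mem_ringPrimeRadical ha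
    exact Submodule.subset_span ⟨a, m, n, hn, by simp [han], rfl⟩
end

section
/- Let φ : M → M' be an R-module epimorphism. If N' is a submodule of M' with β(N') = ⟨E_{M'}(N')⟩, then β(φ^{-1}(N')) = ⟨E_M(φ^{-1}(N'))⟩. -/
section Aux

variable {R : Type*} [Ring R] {M M' : Type*} [AddCommGroup M]
    [Module R M] [AddCommGroup M'] [Module R M'] (φ : M →ₗ[R] M')

lemma isPrime_comap (hsurj : Function.Surjective φ) {P' : Submodule R M'}
    (hP' : IsPrimeSubmodule P') : IsPrimeSubmodule (P'.comap φ) := by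
  obtain ⟨hne, hp⟩ := hP'
  refine ⟨?_, ?_⟩
  · intro htop
    apply hne
    rw [eq_top_iff]
    intro x _
    obtain ⟨y, rfl⟩ := hsurj x
    have : y ∈ P'.comap φ := htop ▸ Submodule.mem_top
    exact this
  · intro A N hAN
    have key : ∀ a ∈ A, ∀ n' ∈ N.map φ, a • n' ∈ P' := by
      rintro a ha n' ⟨n, hn, rfl⟩
      have := hAN a ha n hn
      simpa using this
    rcases hp A (N.map φ) key with h1 | h2
    · left
      intro n hn
      exact h1 (Submodule.mem_map_of_mem hn)
    · right
      intro a ha x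
      simpa using h2 a ha (φ x)

lemma isPrime_map (hsurj : Function.Surjective φ) {P : Submodule R M}
    (hker : LinearMap.ker φ ≤ P) (hP : IsPrimeSubmodule P) :
    IsPrimeSubmodule (P.map φ) := by
  obtain ⟨hne, hp⟩ := hP
  refine ⟨?_, ?_⟩
  · intro htop
    apply hne
    rw [eq_top_iff]
    intro x _
    have : φ x ∈ P.map φ := htop ▸ Submodule.mem_top
    obtain ⟨p, hpP, hpx⟩ := this
    have : x - p ∈ LinearMap.ker φ := by
      simp [LinearMap.mem_ker, map_sub, hpx]
    have hx : x - p ∈ P := hker this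
    simpa using P.add_mem hx hpP
  · intro A N' hAN
    have key : ∀ a ∈ A, ∀ n ∈ N'.comap φ, a • n ∈ P := by
      intro a ha n hn
      have hmem : a • φ n ∈ P.map φ := hAN a ha (φ n) hn
      obtain ⟨p, hpP, hpx⟩ := hmem
      have : a • n - p ∈ LinearMap.ker φ := by
        simp [LinearMap.mem_ker, map_sub, hpx]
      have hx : a • n - p ∈ P := hker this
      simpa using P.add_mem hx hpP
    rcases hp A (N'.comap φ) key with h1 | h2
    · left
      intro n' hn'
      obtain ⟨n, rfl⟩ := hsurj n'
      exact Submodule.mem_map_of_mem (h1 hn')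
    · right
      intro a ha x'
      obtain ⟨x, rfl⟩ := hsurj x'
      rw [← map_smul]
      exact Submodule.mem_map_of_mem (h2 a ha x)

lemma primeRadical_comap (hsurj : Function.Surjective φ) (N' : Submodule R M') :
    primeRadical (N'.comap φ) = (primeRadical N').comap φ := by
  have hker : LinearMap.ker φ ≤ N'.comap φ := by
    intro x hx
    simp only [LinearMap.mem_ker] at hx
    simp [Submodule.mem_comap, hx]
  apply le_antisymm
  · intro x hx
    simp only [Submodule.mem_comap, primeRadical, Submodule.mem_sInf, Set.mem_setOf_eq] at *
    rintro P' ⟨hP', hNP'⟩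
    exact hx (P'.comap φ) ⟨isPrime_comap φ hsurj hP', Submodule.comap_mono hNP'⟩
  · intro x hx
    simp only [Submodule.mem_comap, primeRadical, Submodule.mem_sInf, Set.mem_setOf_eq] at *
    rintro P ⟨hP, hNP⟩
    have hkerP : LinearMap.ker φ ≤ P := le_trans hker hNP
    have hmap : φ x ∈ P.map φ := by
      apply hx
      refine ⟨isPrime_map φ hsurj hkerP hP, ?_⟩
      rw [← Submodule.map_comap_eq_of_surjective hsurj N']
      exact Submodule.map_mono hNP
    obtain ⟨p, hpP, hpx⟩ := hmap
    have : x - p ∈ LinearMap.ker φ := by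
      simp [LinearMap.mem_ker, map_sub, hpx]
    have hxp : x - p ∈ P := hkerP this
    simpa using P.add_mem hxp hpP

lemma span_envelope_comap (hsurj : Function.Surjective φ) (N' : Submodule R M') :
    Submodule.span R (envelope (N'.comap φ)) =
      (Submodule.span R (envelope N')).comap φ := by
  set S := Submodule.span R (envelope (N'.comap φ)) with hS
  have hker : LinearMap.ker φ ≤ S := by
    intro x hx
    simp only [LinearMap.mem_ker] at hx
    apply Submodule.subset_span
    exact ⟨1, x, 1, one_pos, by simp [Submodule.mem_comap, hx], by simp⟩
  apply le_antisymm
  · rw [Submodule.span_le]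
    rintro x ⟨r, m, k, hk, hm, rfl⟩
    simp only [SetLike.mem_coe, Submodule.mem_comap, map_smul]
    apply Submodule.subset_span
    exact ⟨r, φ m, k, hk, by simpa using hm, rfl⟩
  · intro x hx
    simp only [Submodule.mem_comap] at hx
    have hle : Submodule.span R (envelope N') ≤ S.map φ := by
      rw [Submodule.span_le]
      rintro y ⟨r, m', k, hk, hm', rfl⟩
      obtain ⟨m, rfl⟩ := hsurj m'
      refine ⟨r • m, Submodule.subset_span ⟨r, m, k, hk, ?_, rfl⟩, by simp⟩
      simpa [Submodule.mem_comap] using hm'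
    obtain ⟨s, hsS, hsx⟩ := hle hx
    have : x - s ∈ LinearMap.ker φ := by
      simp [LinearMap.mem_ker, map_sub, hsx]
    have hxs : x - s ∈ S := hker this
    simpa using S.add_mem hxs hsS

end Aux

/-- (McCasland–Moore) if `φ : M → M'` is an epimorphism and
`β(N') = ⟨E_{M'}(N')⟩`, then `β(φ⁻¹(N')) = ⟨E_M(φ⁻¹(N'))⟩`. -/
theorem radical_formula_comap {R : Type*} [Ring R] {M M' : Type*} [AddCommGroup M]
    [Module R M] [AddCommGroup M'] [Module R M'] (φ : M →ₗ[R] M')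
    (hsurj : Function.Surjective φ) (N' : Submodule R M')
    (h : primeRadical N' = Submodule.span R (envelope N')) :
    primeRadical (N'.comap φ) = Submodule.span R (envelope (N'.comap φ)) := by
  rw [primeRadical_comap φ hsurj, span_envelope_comap φ hsurj, h]
end

section
/- If P is a completely prime submodule of an R-module M, then for every m ∈ M \ P, the set (P : {m}) = {r ∈ R : rm ∈ P} is a completely prime ideal of R and equals (P : M). -/
/-- if `P` is a completely prime submodule and `m ∉ P`, then
`(P : {m}) = {r : R | r • m ∈ P}` is a completely prime (two-sided) ideal of `R` and
equals `(P : M)`. -/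
theorem colon_completelyPrime {R : Type*} [Ring R] {M : Type*} [AddCommGroup M]
    [Module R M] (P : Submodule R M) (hcp : IsCompletelyPrimeSubmodule P)
    (m : M) (hm : m ∉ P) :
    ∃ I : TwoSidedIdeal R, (I : Set R) = {r : R | r • m ∈ P} ∧
      IsCompletelyPrimeTwoSidedIdeal I ∧
      (I : Set R) = {r : R | ∀ x : M, r • x ∈ P} := by
  classical
  have key : ∀ r : R, r • m ∈ P → ∀ x : M, r • x ∈ P := by
    intro r hr
    rcases hcp.2 r m hr with h | h
    · exact absurd h hm
    · exact h
  refine ⟨TwoSidedIdeal.mk' {r : R | ∀ x : M, r • x ∈ P}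
      (fun x => by simp)
      (fun {a b} ha hb x => by simpa [add_smul] using P.add_mem (ha x) (hb x))
      (fun {a} ha x => by simpa [neg_smul] using P.neg_mem (ha x))
      (fun {a b} hb x => by simpa [mul_smul] using P.smul_mem a (hb x))
      (fun {a b} ha x => by simpa [mul_smul] using ha (b • x)), ?_, ?_, ?_⟩
  · rw [TwoSidedIdeal.coe_mk']
    ext r
    constructor
    · intro h; exact h m
    · intro h; exact key r h
  · constructor
    · intro htop
      have h1 : (1 : R) ∈ (⊤ : TwoSidedIdeal R) := trivial
      rw [← htop, TwoSidedIdeal.mem_mk'] at h1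
      exact hm (by simpa using h1 m)
    · intro a b hab
      rw [TwoSidedIdeal.mem_mk'] at hab ⊢
      rw [TwoSidedIdeal.mem_mk']
      have : a • (b • m) ∈ P := by simpa [mul_smul] using hab m
      rcases hcp.2 a (b • m) this with h | h
      · exact Or.inr (key b h)
      · exact Or.inl h
  · exact TwoSidedIdeal.coe_mk' _ _ _ _ _ _
end
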